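/- Let r ≥ 1 and let L_0, L_1, …, L_r be hyperbolic difference operators with coefficients a_j, b_j, c_j and Laplace invariants k_j, h_j, such that L_{j+1} is a Laplace transform of L_j for 0 ≤ j < r, h_j is nowhere vanishing for 0 ≤ j ≤ r−1, and h_r vanishes identically. For 0 ≤ j ≤ r−1 define the operator M_j on functions χ : ℤ × ℤ → ℂ by (M_j χ)(n,m) = −(a_j(n,m)·b_j(n,m−1)·h_j(n,m))⁻¹ · (χ(n,m+1) + a_j(n,m)χ(n,m)). Then a function ψ : ℤ × ℤ → ℂ satisfies L_0ψ = 0 if and only if there exists ψ_r : ℤ × ℤ → ℂ with L_rψ_r = 0 and ψ = M_0(M_1(⋯(M_{r−1}ψ_r)⋯)). -/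

import Mathlib

noncomputable section

/-- The hyperbolic difference operator with coefficients `a`, `b`, `c`:
`(Lψ)(n,m) = ψ(n+1,m+1) + a(n,m)ψ(n+1,m) + b(n,m)ψ(n,m+1) + c(n,m)ψ(n,m)`. -/
def Lop (a b c : ℤ → ℤ → ℂ) (ψ : ℤ → ℤ → ℂ) : ℤ → ℤ → ℂ :=
  fun n m => ψ (n + 1) (m + 1) + a n m * ψ (n + 1) m + b n m * ψ n (m + 1) + c n m * ψ n m

/-- The Laplace invariant `k(n,m) = c(n,m)/(a(n-1,m)b(n,m)) - 1`. -/
def kInv (a b c : ℤ → ℤ → ℂ) : ℤ → ℤ → ℂ :=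
  fun n m => c n m / (a (n - 1) m * b n m) - 1

/-- The Laplace invariant `h(n,m) = c(n,m)/(a(n,m)b(n,m-1)) - 1`. -/
def hInv (a b c : ℤ → ℤ → ℂ) : ℤ → ℤ → ℂ :=
  fun n m => c n m / (a n m * b n (m - 1)) - 1

/-- The operator `(Dψ)(n,m) = ψ(n+1,m) + b(n,m-1)ψ(n,m)`. -/
def Dop (b : ℤ → ℤ → ℂ) (ψ : ℤ → ℤ → ℂ) : ℤ → ℤ → ℂ :=
  fun n m => ψ (n + 1) m + b n (m - 1) * ψ n m

/-- `L̂` (coefficients `a' b' c'`) is a Laplace transform of `L` (coefficients `a b c`). -/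
def IsLaplaceTransform (a' b' c' a b c : ℤ → ℤ → ℂ) : Prop :=
  ∃ q : ℤ → ℤ → ℂ, ∀ ψ : ℤ → ℤ → ℂ, ∀ n m : ℤ,
    Lop a' b' c' (Dop b ψ) n m = Lop a b c ψ (n + 1) m + q n m * Lop a b c ψ n m

/-- The operator `M_j` built from the coefficients of `L_j`:
`(Mχ)(n,m) = -(a(n,m)b(n,m-1)h(n,m))⁻¹ (χ(n,m+1) + a(n,m)χ(n,m))`. -/
def Mop (a b c : ℤ → ℤ → ℂ) (χ : ℤ → ℤ → ℂ) : ℤ → ℤ → ℂ :=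
  fun n m => -(a n m * b n (m - 1) * hInv a b c n m)⁻¹ * (χ n (m + 1) + a n m * χ n m)

/-- `composeM a b c r = M_0 ∘ M_1 ∘ ⋯ ∘ M_{r-1}`. -/
def composeM (a b c : ℕ → ℤ → ℤ → ℂ) : ℕ → (ℤ → ℤ → ℂ) → (ℤ → ℤ → ℂ)
  | 0 => id
  | r + 1 => fun χ => composeM a b c r (Mop (a r) (b r) (c r) χ)

lemma Mop_eq (a b c : ℤ → ℤ → ℂ) (χ : ℤ → ℤ → ℂ) (n m : ℤ)
    (hA : a n m ≠ 0) (hB : b n (m-1) ≠ 0) :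
    Mop a b c χ n m = -(c n m - a n m * b n (m-1))⁻¹ * (χ n (m + 1) + a n m * χ n m) := by
  have : a n m * b n (m - 1) * hInv a b c n m = c n m - a n m * b n (m-1) := by
    rw [hInv]; field_simp
  rw [Mop, this]

lemma e_ne (a b c : ℤ → ℤ → ℂ) (n m : ℤ) (hA : a n m ≠ 0) (hB : b n (m-1) ≠ 0)
    (hH : hInv a b c n m ≠ 0) : c n m - a n m * b n (m-1) ≠ 0 := by
  intro h
  apply hH
  show c n m / (a n m * b n (m - 1)) - 1 = 0
  rw [sub_eq_zero.mp h, div_self (mul_ne_zero hA hB), sub_self]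

lemma MD (a b c : ℤ → ℤ → ℂ) (ψ : ℤ → ℤ → ℂ) (n m : ℤ)
    (hA : a n m ≠ 0) (hB : b n (m-1) ≠ 0) (hH : hInv a b c n m ≠ 0)
    (hL : Lop a b c ψ n m = 0) :
    Mop a b c (Dop b ψ) n m = ψ n m := by
  have he := e_ne a b c n m hA hB hH
  rw [Mop_eq a b c _ n m hA hB]
  simp only [Dop, add_sub_cancel_right]
  rw [neg_mul, neg_eq_iff_eq_neg, inv_mul_eq_div, div_eq_iff he]
  rw [Lop] at hL
  linear_combination hL

lemma extract (a' b' c' a b c q : ℤ → ℤ → ℂ)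
    (ht : ∀ ψ : ℤ → ℤ → ℂ, ∀ n m : ℤ,
      Lop a' b' c' (Dop b ψ) n m = Lop a b c ψ (n + 1) m + q n m * Lop a b c ψ n m)
    (n m : ℤ) :
    a' n m = a (n+1) m ∧
    (b' n m = q n m ∨ b n m = 0) ∧
    c' n m * b n (m-1) = q n m * c n m ∧
    a' n m * b (n+1) (m-1) + c' n m = c (n+1) m + q n m * a n m := by
  have e2 : n + 1 + 1 = n + 2 := by ring
  refine ⟨?_, ?_, ?_, ?_⟩
  · have h1 := ht (fun x y => if x = n+2 ∧ y = m then (1:ℂ) else 0) n m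
    norm_num [Lop, Dop] at h1
    rw [if_pos e2, if_pos e2] at h1
    exact h1
  · have h1 := ht (fun x y => if x = n ∧ y = m+1 then (1:ℂ) else 0) n m
    norm_num [Lop, Dop] at h1
    exact h1
  · have h1 := ht (fun x y => if x = n ∧ y = m then (1:ℂ) else 0) n m
    norm_num [Lop, Dop] at h1
    rw [if_neg (by omega), if_neg (by omega)] at h1
    simpa using h1
  · have h1 := ht (fun x y => if x = n+1 ∧ y = m then (1:ℂ) else 0) n m
    norm_num [Lop, Dop] at h1
    exact h1

lemma kerM (a' b' c' a b c q : ℤ → ℤ → ℂ)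
    (ht : ∀ ψ : ℤ → ℤ → ℂ, ∀ n m : ℤ,
      Lop a' b' c' (Dop b ψ) n m = Lop a b c ψ (n + 1) m + q n m * Lop a b c ψ n m)
    (hA : ∀ n m, a n m ≠ 0) (hB : ∀ n m, b n m ≠ 0)
    (hH : ∀ n m, hInv a b c n m ≠ 0)
    (χ : ℤ → ℤ → ℂ) (hχ : ∀ n m, Lop a' b' c' χ n m = 0)
    (n m : ℤ) : Lop a b c (Mop a b c χ) n m = 0 := by
  obtain ⟨R1, R2or, R3, R4⟩ := extract a' b' c' a b c q ht n m
  obtain ⟨R1', R2or', R3', R4'⟩ := extract a' b' c' a b c q ht n (m+1)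
  have em : m + 1 - 1 = m := by ring
  rw [em] at R3' R4'
  have R2 : b' n m = q n m := R2or.resolve_right (hB n m)
  have R2' : b' n (m+1) = q n (m+1) := R2or'.resolve_right (hB n (m+1))
  rw [R1] at R4
  rw [R1'] at R4'
  -- e values and their nonvanishing
  have he00 : c n m - a n m * b n (m-1) ≠ 0 := e_ne a b c n m (hA n m) (hB n (m-1)) (hH n m)
  have he01 : c n (m+1) - a n (m+1) * b n m ≠ 0 := by
    have := e_ne a b c n (m+1) (hA n (m+1)) (hB n m ∘ (em ▸ ·)) (hH n (m+1))
    rwa [em] at this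
  have he10 : c (n+1) m - a (n+1) m * b (n+1) (m-1) ≠ 0 :=
    e_ne a b c (n+1) m (hA (n+1) m) (hB (n+1) (m-1)) (hH (n+1) m)
  have he11 : c (n+1) (m+1) - a (n+1) (m+1) * b (n+1) m ≠ 0 := by
    have := e_ne a b c (n+1) (m+1) (hA (n+1) (m+1)) (hB (n+1) m ∘ (em ▸ ·)) (hH (n+1) (m+1))
    rwa [em] at this
  -- derived relations
  have G1 : q n m * (c n m - a n m * b n (m-1)) =
      (c (n+1) m - a (n+1) m * b (n+1) (m-1)) * b n (m-1) := by
    linear_combination b n (m-1) * R4 - R3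
  have G2 : c' n m * (c n m - a n m * b n (m-1)) =
      c n m * (c (n+1) m - a (n+1) m * b (n+1) (m-1)) := by
    linear_combination c n m * R4 - a n m * R3
  have G1' : q n (m+1) * (c n (m+1) - a n (m+1) * b n m) =
      (c (n+1) (m+1) - a (n+1) (m+1) * b (n+1) m) * b n m := by
    linear_combination b n m * R4' - R3'
  have G2' : c' n (m+1) * (c n (m+1) - a n (m+1) * b n m) =
      c n (m+1) * (c (n+1) (m+1) - a (n+1) (m+1) * b (n+1) m) := by
    linear_combination c n (m+1) * R4' - a n (m+1) * R3'
  have hχ0 := hχ n m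
  have hχ1 := hχ n (m+1)
  rw [Lop] at hχ0 hχ1
  have e12 : m + 1 + 1 = m + 2 := by ring
  rw [e12] at hχ1
  -- Mop values
  have hM00 := Mop_eq a b c χ n m (hA n m) (hB n (m-1))
  have hM10 := Mop_eq a b c χ (n+1) m (hA (n+1) m) (hB (n+1) (m-1))
  have hM01 := Mop_eq a b c χ n (m+1) (hA n (m+1)) (hB n (m+1-1) ∘ (em ▸ ·))
  have hM11 := Mop_eq a b c χ (n+1) (m+1) (hA (n+1) (m+1)) (hB (n+1) (m+1-1) ∘ (em ▸ ·))
  rw [em, e12] at hM01 hM11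
  rw [Lop, hM00, hM10, hM01, hM11]
  have he01' : c n (m+1) - b n m * a n (m+1) ≠ 0 := by rwa [mul_comm (b n m)]
  field_simp [he00, he01', he10, he11]
  linear_combination
    (-( (c n m - a n m * b n (m-1)) * (c n (m+1) - a n (m+1) * b n m) * (c (n+1) m - a (n+1) m * b (n+1) (m-1)))) * hχ1
    - a n m * (c n m - a n m * b n (m-1)) * (c n (m+1) - a n (m+1) * b n m) * (c (n+1) (m+1) - a (n+1) (m+1) * b (n+1) m) * hχ0
    + (c n m - a n m * b n (m-1)) * (c n (m+1) - a n (m+1) * b n m) * (c (n+1) m - a (n+1) m * b (n+1) (m-1)) * χ (n+1) (m+1) * R1'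
    + a n m * (c n m - a n m * b n (m-1)) * (c n (m+1) - a n (m+1) * b n m) * (c (n+1) (m+1) - a (n+1) (m+1) * b (n+1) m) * χ (n+1) m * R1
    + (c n m - a n m * b n (m-1)) * (c n (m+1) - a n (m+1) * b n m) * (c (n+1) m - a (n+1) m * b (n+1) (m-1)) * χ n (m+2) * R2'
    + a n m * (c n m - a n m * b n (m-1)) * (c n (m+1) - a n (m+1) * b n m) * (c (n+1) (m+1) - a (n+1) (m+1) * b (n+1) m) * χ n (m+1) * R2
    + (c n m - a n m * b n (m-1)) * (c (n+1) m - a (n+1) m * b (n+1) (m-1)) * χ n (m+2) * G1'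
    + a n m * (c n (m+1) - a n (m+1) * b n m) * (c (n+1) (m+1) - a (n+1) (m+1) * b (n+1) m) * χ n (m+1) * G1
    + (c n m - a n m * b n (m-1)) * (c (n+1) m - a (n+1) m * b (n+1) (m-1)) * χ n (m+1) * G2'
    + a n m * (c n (m+1) - a n (m+1) * b n m) * (c (n+1) (m+1) - a (n+1) (m+1) * b (n+1) m) * χ n m * G2


/-- D maps kernels to kernels. -/
lemma DKer (a' b' c' a b c q : ℤ → ℤ → ℂ)
    (ht : ∀ ψ : ℤ → ℤ → ℂ, ∀ n m : ℤ,
      Lop a' b' c' (Dop b ψ) n m = Lop a b c ψ (n + 1) m + q n m * Lop a b c ψ n m)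
    (ψ : ℤ → ℤ → ℂ) (hψ : ∀ n m, Lop a b c ψ n m = 0) (n m : ℤ) :
    Lop a' b' c' (Dop b ψ) n m = 0 := by
  rw [ht ψ n m, hψ, hψ]; ring

/-- the Laplace cascade: `ψ ∈ Ker L_0` iff `ψ = M_0(M_1(⋯(M_{r-1}ψ_r)⋯))`
for some `ψ_r ∈ Ker L_r`. -/
theorem stmt4 (r : ℕ) (hr : 1 ≤ r) (a b c : ℕ → ℤ → ℤ → ℂ)
    (ha : ∀ j ≤ r, ∀ n m, a j n m ≠ 0) (hb : ∀ j ≤ r, ∀ n m, b j n m ≠ 0)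
    (hchain : ∀ j < r,
      IsLaplaceTransform (a (j + 1)) (b (j + 1)) (c (j + 1)) (a j) (b j) (c j))
    (hmid : ∀ j ≤ r - 1, ∀ n m, hInv (a j) (b j) (c j) n m ≠ 0)
    (hend : ∀ n m, hInv (a r) (b r) (c r) n m = 0)
    (ψ : ℤ → ℤ → ℂ) :
    (∀ n m, Lop (a 0) (b 0) (c 0) ψ n m = 0) ↔
      ∃ ψr : ℤ → ℤ → ℂ, (∀ n m, Lop (a r) (b r) (c r) ψr n m = 0) ∧
        ψ = composeM a b c r ψr := by
  constructor
  · intro hψ0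
    have main : ∀ s ≤ r, ∃ φ : ℤ → ℤ → ℂ,
        (∀ n m, Lop (a s) (b s) (c s) φ n m = 0) ∧ ψ = composeM a b c s φ := by
      intro s hs
      induction s with
      | zero => exact ⟨ψ, hψ0, rfl⟩
      | succ t ih =>
        obtain ⟨φ, hφ, hcomp⟩ := ih (by omega)
        obtain ⟨q, htq⟩ := hchain t (by omega)
        refine ⟨Dop (b t) φ, fun n m => DKer _ _ _ _ _ _ q htq φ hφ n m, ?_⟩
        have hMD : Mop (a t) (b t) (c t) (Dop (b t) φ) = φ := by
          funext n m
          exact MD (a t) (b t) (c t) φ n m (ha t (by omega) n m)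
            (hb t (by omega) n (m-1)) (hmid t (by omega) n m) (hφ n m)
        show ψ = composeM a b c t (Mop (a t) (b t) (c t) (Dop (b t) φ))
        rw [hMD]; exact hcomp
    exact main r le_rfl
  · rintro ⟨ψr, hker, rfl⟩
    have main : ∀ s ≤ r, ∀ φ : ℤ → ℤ → ℂ,
        (∀ n m, Lop (a s) (b s) (c s) φ n m = 0) →
        ∀ n m, Lop (a 0) (b 0) (c 0) (composeM a b c s φ) n m = 0 := by
      intro s hs
      induction s with
      | zero => intro φ hφ n m; exact hφ n m
      | succ t ih =>
        intro φ hφ n m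
        obtain ⟨q, htq⟩ := hchain t (by omega)
        exact ih (by omega) (Mop (a t) (b t) (c t) φ)
          (fun n m => kerM _ _ _ _ _ _ q htq (ha t (by omega)) (hb t (by omega))
            (hmid t (by omega)) φ hφ n m) n m
    exact main r le_rfl ψr hker
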